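/- Let (Ω, F, P) be a probability space, α ∈ (0,1], and let C : ℝ^m × Ω → ℝ^m be measurable with E_ω ‖C(v, ω) − v‖² ≤ (1−α)‖v‖² for every fixed v ∈ ℝ^m. Fix h, h', G ∈ ℝ^m and set G'(ω) = G + C(h' − G, ω). Then for every ε > 0, E_ω ‖G'(ω) − h'‖² ≤ (1−α)(1+ε)‖G − h‖² + (1−α)(1+ε^{−1})‖h' − h‖². -/
import Mathlib


open MeasureTheory

/-- **Stochastic one-step core of Lemma 2 (recursive distortion bound).**
If `C` is a (random) contractive compressor with parameter `α ∈ (0,1]` and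
`G' ω = G + C (h' - G) ω` is the EF21 error-feedback update, then for every `ε > 0`,
`E ‖G' - h'‖² ≤ (1-α)(1+ε)‖G - h‖² + (1-α)(1+ε⁻¹)‖h' - h‖²`. -/
theorem ef21_one_step_stochastic
    (m : ℕ) {Ω : Type*} [MeasureSpace Ω] [IsProbabilityMeasure (volume : Measure Ω)]
    (α : ℝ) (hα : α ∈ Set.Ioc (0 : ℝ) 1)
    (C : EuclideanSpace ℝ (Fin m) → Ω → EuclideanSpace ℝ (Fin m))
    (hCmeas : Measurable fun p : EuclideanSpace ℝ (Fin m) × Ω => C p.1 p.2)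
    (hC : ∀ v : EuclideanSpace ℝ (Fin m), ∫ ω, ‖C v ω - v‖ ^ 2 ≤ (1 - α) * ‖v‖ ^ 2)
    (h h' G : EuclideanSpace ℝ (Fin m))
    (ε : ℝ) (hε : 0 < ε) :
    ∫ ω, ‖(G + C (h' - G) ω) - h'‖ ^ 2
      ≤ (1 - α) * (1 + ε) * ‖G - h‖ ^ 2 + (1 - α) * (1 + ε⁻¹) * ‖h' - h‖ ^ 2 := by
  have hkey : ∀ ω, (G + C (h' - G) ω) - h' = C (h' - G) ω - (h' - G) := by
    intro ω; abel
  have h1 : (∫ ω, ‖(G + C (h' - G) ω) - h'‖ ^ 2) ≤ (1 - α) * ‖h' - G‖ ^ 2 := by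
    simp_rw [hkey]; exact hC (h' - G)
  have h2 : ‖h' - G‖ ≤ ‖G - h‖ + ‖h' - h‖ := by
    have : h' - G = (h' - h) - (G - h) := by abel
    rw [this, add_comm]
    exact norm_sub_le _ _
  have ha : (0:ℝ) ≤ ‖G - h‖ := norm_nonneg _
  have hb : (0:ℝ) ≤ ‖h' - h‖ := norm_nonneg _
  have hv : (0:ℝ) ≤ ‖h' - G‖ := norm_nonneg _
  have hαle : (1:ℝ) - α ≥ 0 := by linarith [hα.2]
  have hεinv : ε * ε⁻¹ = 1 := mul_inv_cancel₀ hε.ne'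
  have hεinv0 : (0:ℝ) ≤ ε⁻¹ := le_of_lt (inv_pos.mpr hε)
  have young : ‖h' - G‖ ^ 2 ≤ (1 + ε) * ‖G - h‖ ^ 2 + (1 + ε⁻¹) * ‖h' - h‖ ^ 2 := by
    have hsq : ‖h' - G‖ * ‖h' - G‖ ≤ (‖G - h‖ + ‖h' - h‖) * (‖G - h‖ + ‖h' - h‖) :=
      mul_self_le_mul_self hv h2
    nlinarith [mul_nonneg hεinv0 (sq_nonneg (ε * ‖G - h‖ - ‖h' - h‖)), hεinv, hsq]
  nlinarith [mul_le_mul_of_nonneg_left young hαle]
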